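/- arXiv:1308.2536 — 3 statements merged into one kernel-verified Lean document; each statement's English description precedes it below -/
import Mathlib

section
/- Let ξ, g, g† ∈ L¹(M) with M a measure space, and suppose M = M₁ ∪ M₂ is a partition into measurable sets with ‖ξ‖_{L¹(M₁)} ≤ ε, |M₂| ≤ η, and g - g† ∈ L^∞(M). Let g^obs = g† + ξ. Then ‖g - g^obs‖_{L¹(M)} - ‖ξ‖_{L¹(M)} ≥ ‖g - g†‖_{L¹(M)} - 2(ε + η‖g - g†‖_{L^∞(M₂)}). -/
open MeasureTheory Set
open scoped ENNReal

theorem impulsive_noise_data_error_bound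
    {M : Type*} [MeasurableSpace M] (μ : Measure M)
    (ξ g gdag gobs : M → ℝ) (M₁ M₂ : Set M) (ε η : ℝ)
    (hM₁ : MeasurableSet M₁) (hM₂ : MeasurableSet M₂)
    (hunion : M₁ ∪ M₂ = Set.univ) (hdisj : Disjoint M₁ M₂)
    (hξ : Integrable ξ μ) (hg : Integrable g μ) (hgdag : Integrable gdag μ)
    (hLinf : MemLp (fun x => g x - gdag x) ⊤ μ)
    (hε : ∫ x in M₁, |ξ x| ∂μ ≤ ε)
    (hη : μ M₂ ≤ ENNReal.ofReal η) (hη0 : 0 ≤ η)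
    (hobs : ∀ x, gobs x = gdag x + ξ x) :
    (∫ x, |g x - gobs x| ∂μ) - ∫ x, |ξ x| ∂μ ≥
      (∫ x, |g x - gdag x| ∂μ) -
        2 * (ε + η * (eLpNorm (fun x => g x - gdag x) ⊤ (μ.restrict M₂)).toReal) := by
  set C := (eLpNorm (fun x => g x - gdag x) ⊤ (μ.restrict M₂)).toReal with hC
  have hd : Integrable (fun x => g x - gdag x) μ := hg.sub hgdag
  have hdξ : Integrable (fun x => (g x - gdag x) - ξ x) μ := hd.sub hξ
  have hM2c : M₂ = M₁ᶜ := by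
    ext x
    constructor
    · intro hx hx1
      exact hdisj.ne_of_mem hx1 hx rfl
    · intro hx
      have : x ∈ M₁ ∪ M₂ := hunion ▸ mem_univ x
      rcases this with h | h
      · exact absurd h hx
      · exact h
  have split : ∀ f : M → ℝ, Integrable f μ →
      ∫ x, f x ∂μ = (∫ x in M₁, f x ∂μ) + ∫ x in M₂, f x ∂μ := by
    intro f hf
    rw [hM2c, integral_add_compl hM₁ hf]
  have heq : (fun x => |g x - gobs x|) = fun x => |(g x - gdag x) - ξ x| := by
    funext x; rw [hobs]; ring_nf
  have hfin : μ M₂ < ⊤ := lt_of_le_of_lt hη ENNReal.ofReal_lt_top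
  haveI : IsFiniteMeasure (μ.restrict M₂) :=
    ⟨by rwa [Measure.restrict_apply_univ]⟩
  -- pointwise triangle inequalities
  have A : (∫ x in M₁, |g x - gdag x| ∂μ) - (∫ x in M₁, |ξ x| ∂μ)
      ≤ ∫ x in M₁, |(g x - gdag x) - ξ x| ∂μ := by
    rw [← integral_sub (hd.abs.restrict) (hξ.abs.restrict)]
    refine integral_mono (hd.abs.restrict.sub hξ.abs.restrict) hdξ.abs.restrict ?_
    intro x
    exact abs_sub_abs_le_abs_sub _ _
  have B : (∫ x in M₂, |ξ x| ∂μ) - (∫ x in M₂, |g x - gdag x| ∂μ)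
      ≤ ∫ x in M₂, |(g x - gdag x) - ξ x| ∂μ := by
    rw [← integral_sub (hξ.abs.restrict) (hd.abs.restrict)]
    refine integral_mono (hξ.abs.restrict.sub hd.abs.restrict) hdξ.abs.restrict ?_
    intro x
    calc |ξ x| - |g x - gdag x| ≤ |ξ x - (g x - gdag x)| := abs_sub_abs_le_abs_sub _ _
      _ = |(g x - gdag x) - ξ x| := abs_sub_comm _ _
  -- L∞ bound on M₂
  have hTop : eLpNorm (fun x => g x - gdag x) ⊤ (μ.restrict M₂) ≠ ⊤ :=
    (hLinf.restrict M₂).eLpNorm_ne_top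
  have hae : ∀ᵐ x ∂(μ.restrict M₂), |g x - gdag x| ≤ C := by
    have h := ae_le_eLpNormEssSup (f := fun x => g x - gdag x) (μ := μ.restrict M₂)
    filter_upwards [h] with x hx
    have : ((‖g x - gdag x‖₊ : ℝ≥0∞)).toReal ≤ C := by
      rw [hC, eLpNorm_exponent_top]
      exact ENNReal.toReal_mono (by rwa [eLpNorm_exponent_top] at hTop) hx
    simpa [Real.norm_eq_abs] using this
  have Cb : ∫ x in M₂, |g x - gdag x| ∂μ ≤ η * C := by
    have h1 : ∫ x in M₂, |g x - gdag x| ∂μ ≤ ∫ _x in M₂, C ∂μ :=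
      integral_mono_ae hd.abs.restrict (integrable_const C)
        (by filter_upwards [hae] with x hx using hx)
    have h2 : ∫ _x in M₂, C ∂μ = (μ M₂).toReal * C := by
      rw [integral_const, measureReal_def, Measure.restrict_apply_univ, smul_eq_mul]
    have h3 : (μ M₂).toReal ≤ η := ENNReal.toReal_le_of_le_ofReal hη0 hη
    have hC0 : 0 ≤ C := ENNReal.toReal_nonneg
    calc ∫ x in M₂, |g x - gdag x| ∂μ ≤ (μ M₂).toReal * C := h1.trans_eq h2
      _ ≤ η * C := mul_le_mul_of_nonneg_right h3 hC0
  have e1 := split (fun x => |(g x - gdag x) - ξ x|) hdξ.abs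
  have e2 := split (fun x => |ξ x|) hξ.abs
  have e3 := split (fun x => |g x - gdag x|) hd.abs
  rw [heq]
  rw [e1, e2, e3]
  linarith
end

section
/- Under the assumptions of the previous statement, assume additionally the variational source condition β·D(u) ≤ R(u) - R(u†) + φ(‖F(u) - g†‖_Y^r) for all u ∈ dom R, where β > 0, D is the Bregman distance of R at u† with respect to some subgradient, and φ is a concave index function. Then for each minimizer u_α of the Tikhonov functional: β·D(u_α) ≤ err(F(u_α))/(rα) + ψ(r C_err α), where ψ(α) := sup_{τ≥0}(-τ/α + φ(τ)). -/
open Set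

theorem tikhonov_error_decomposition_bregman
    {X Y : Type*} [NormedAddCommGroup X] [NormedSpace ℝ X] [NormedAddCommGroup Y]
    (domR : Set X) (F : X → Y) (R : X → ℝ) (err : Y → ℝ)
    (udag : X) (gdag gobs : Y) (Cerr r α β : ℝ) (ustar : X →L[ℝ] ℝ) (φ : ℝ → ℝ)
    (D : X → ℝ) (hD : ∀ u, D u = R u - R udag - ustar (u - udag))
    (hudag : udag ∈ domR) (hgdag : gdag = F udag)
    (hCerr : 0 < Cerr) (hr : 1 ≤ r) (hα : 0 < α) (hβ : 0 < β)
    (hnoise : ∀ u ∈ domR,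
      ‖F u - gobs‖ ^ r - ‖gdag - gobs‖ ^ r ≥ (1 / Cerr) * ‖F u - gdag‖ ^ r - err (F u))
    (hφconc : ConcaveOn ℝ (Ici 0) φ) (hφmono : MonotoneOn φ (Ici 0))
    (hφ0 : φ 0 = 0) (hφnonneg : ∀ t ∈ Ici (0:ℝ), 0 ≤ φ t)
    (hvsc : ∀ u ∈ domR, β * D u ≤ R u - R udag + φ (‖F u - gdag‖ ^ r))
    (ψ : ℝ → EReal)
    (hψ : ∀ t : ℝ, ψ t = ⨆ τ : Ici (0:ℝ), ((-(τ : ℝ) / t + φ τ : ℝ) : EReal))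
    (uα : X) (huα : uα ∈ domR)
    (hmin : ∀ u ∈ domR,
      (1 / (α * r)) * ‖F uα - gobs‖ ^ r + R uα ≤ (1 / (α * r)) * ‖F u - gobs‖ ^ r + R u) :
    ((β * D uα : ℝ) : EReal) ≤ ((err (F uα) / (r * α) : ℝ) : EReal) + ψ (r * Cerr * α) := by
  set t : ℝ := ‖F uα - gdag‖ ^ r with ht_def
  have ht : (0:ℝ) ≤ t := Real.rpow_nonneg (norm_nonneg _) r
  have hr0 : (0:ℝ) < r := lt_of_lt_of_le one_pos hr
  have hmin' := hmin udag hudag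
  rw [← hgdag] at hmin'
  have hn := hnoise uα huα
  have hreal : β * D uα ≤ err (F uα) / (r * α) + (-t / (r * Cerr * α) + φ t) := by
    have h1 := hvsc uα huα
    have hαr : 0 < α * r := mul_pos hα hr0
    -- R uα - R udag ≤ (1/(αr)) * (‖gdag-gobs‖^r - ‖F uα - gobs‖^r)
    have h2 : R uα - R udag ≤ (1 / (α * r)) * (‖gdag - gobs‖ ^ r - ‖F uα - gobs‖ ^ r) := by
      nlinarith [hmin']
    have h3 : ‖gdag - gobs‖ ^ r - ‖F uα - gobs‖ ^ r ≤ err (F uα) - (1 / Cerr) * t := by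
      linarith [hn]
    have h4 : R uα - R udag ≤ (1 / (α * r)) * (err (F uα) - (1 / Cerr) * t) := by
      have := mul_le_mul_of_nonneg_left h3 (le_of_lt (one_div_pos.mpr hαr))
      linarith
    have heq : (1 / (α * r)) * (err (F uα) - (1 / Cerr) * t)
        = err (F uα) / (r * α) + (-t / (r * Cerr * α)) := by
      field_simp
      ring
    calc β * D uα ≤ R uα - R udag + φ t := h1
      _ ≤ (1 / (α * r)) * (err (F uα) - (1 / Cerr) * t) + φ t := by linarith
      _ = err (F uα) / (r * α) + (-t / (r * Cerr * α) + φ t) := by rw [heq]; ring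
  have hψle : ((-t / (r * Cerr * α) + φ t : ℝ) : EReal) ≤ ψ (r * Cerr * α) := by
    rw [hψ]
    exact le_iSup (fun τ : Ici (0:ℝ) => ((-(τ : ℝ) / (r * Cerr * α) + φ τ : ℝ) : EReal))
      ⟨t, ht⟩
  calc ((β * D uα : ℝ) : EReal)
      ≤ ((err (F uα) / (r * α) + (-t / (r * Cerr * α) + φ t) : ℝ) : EReal) :=
        EReal.coe_le_coe_iff.mpr hreal
    _ = ((err (F uα) / (r * α) : ℝ) : EReal) + ((-t / (r * Cerr * α) + φ t : ℝ) : EReal) := by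
        push_cast; ring
    _ ≤ ((err (F uα) / (r * α) : ℝ) : EReal) + ψ (r * Cerr * α) :=
        add_le_add le_rfl hψle
end

section
/- Let φ : [0,∞) → [0,∞) be an index function (concave, increasing, φ(0)=0) such that φ^{1+δ} is concave for some δ > 0. Define ψ(α) := sup_{τ≥0}(-τ/α + φ(τ)) for α > 0. Then for all C ≥ 1 and t > 0, ψ(C·t) ≤ C^{1/δ}·ψ(t). -/
open Set

theorem psi_scaling (φ : ℝ → ℝ) (δ : ℝ) (hδ : 0 < δ)
    (hφconc : ConcaveOn ℝ (Ici 0) φ) (hφmono : MonotoneOn φ (Ici 0))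
    (hφ0 : φ 0 = 0) (hφnonneg : ∀ t ∈ Ici (0:ℝ), 0 ≤ φ t)
    (hpow : ConcaveOn ℝ (Ici 0) (fun t => φ t ^ (1 + δ)))
    (ψ : ℝ → EReal)
    (hψ : ∀ t : ℝ, ψ t = ⨆ τ : Ici (0:ℝ), ((-(τ : ℝ) / t + φ τ : ℝ) : EReal)) :
    ∀ C t : ℝ, 1 ≤ C → 0 < t →
      ψ (C * t) ≤ ((C ^ ((1:ℝ) / δ) : ℝ) : EReal) * ψ t := by
  intro C t hC ht
  have hCpos : (0:ℝ) < C := lt_of_lt_of_le one_pos hC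
  set K : ℝ := C ^ ((1:ℝ) / δ) with hK
  have hKpos : 0 < K := Real.rpow_pos_of_pos hCpos _
  have hK1 : 1 ≤ K := Real.one_le_rpow hC (by positivity)
  have hCK1 : 1 ≤ C * K := one_le_mul_of_one_le_of_one_le hC hK1
  have hCKpos : 0 < C * K := mul_pos hCpos hKpos
  have h1δ : (0:ℝ) < 1 + δ := by linarith
  -- (C*K)^(1/(1+δ)) = K
  have hCKpow : (C * K) ^ ((1:ℝ)/(1+δ)) = K := by
    rw [Real.mul_rpow hCpos.le hKpos.le, hK, ← Real.rpow_mul hCpos.le,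
      ← Real.rpow_add hCpos]
    congr 1
    field_simp
    ring
  -- key scaling inequality for φ: φ τ ≤ K * φ (τ / (C*K)) for τ ≥ 0
  have key : ∀ τ : ℝ, 0 ≤ τ → φ τ ≤ K * φ (τ / (C * K)) := by
    intro τ hτ
    set lam : ℝ := (C * K)⁻¹ with hlam
    have hlam_pos : 0 < lam := inv_pos.mpr hCKpos
    have hστ : τ / (C * K) = lam * τ := by rw [hlam, div_eq_inv_mul]
    have hconc := hpow.2 (x := τ) (mem_Ici.mpr hτ) (y := 0) self_mem_Ici hlam_pos.le
      (by have := inv_le_one_of_one_le₀ hCK1; linarith : (0:ℝ) ≤ 1 - lam) (by ring)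
    simp only [smul_eq_mul, mul_zero, add_zero, hφ0] at hconc
    rw [Real.zero_rpow h1δ.ne', mul_zero, add_zero] at hconc
    -- hconc : lam * φ τ ^ (1+δ) ≤ φ (lam * τ) ^ (1+δ)
    have hφτ : 0 ≤ φ τ := hφnonneg τ hτ
    have hphilam : 0 ≤ φ (lam * τ) := hφnonneg _ (mul_nonneg hlam_pos.le hτ)
    have hmono := Real.rpow_le_rpow (by positivity) hconc
      (by positivity : (0:ℝ) ≤ 1/(1+δ))
    rw [Real.mul_rpow hlam_pos.le (by positivity), ← Real.rpow_mul hphilam,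
      ← Real.rpow_mul hφτ, mul_one_div, div_self h1δ.ne', Real.rpow_one,
      Real.rpow_one, hlam, ← Real.rpow_neg_one (C * K), ← Real.rpow_mul hCKpos.le,
      neg_one_mul, Real.rpow_neg hCKpos.le, hCKpow] at hmono
    rw [Real.rpow_neg_one] at hmono
    -- hmono : K⁻¹ * φ τ ≤ φ (lam * τ)
    rw [hστ]
    calc φ τ = K * (K⁻¹ * φ τ) := by field_simp
    _ ≤ K * φ (lam * τ) := by
        exact mul_le_mul_of_nonneg_left hmono hKpos.le
  -- main estimate
  rw [hψ (C * t), hψ t]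
  apply iSup_le
  rintro ⟨τ, hτ⟩
  set σ : ℝ := τ / (C * K) with hσdef
  have hσ : σ ∈ Ici (0:ℝ) := div_nonneg hτ hCKpos.le
  have hreal : -τ / (C * t) + φ τ ≤ K * (-σ / t + φ σ) := by
    have hKσ : K * σ = τ / C := by
      rw [hσdef]; field_simp
    have : K * (-σ / t + φ σ) = -(τ / C) / t + K * φ σ := by
      rw [mul_add, ← hKσ]; ring
    rw [this]
    have h1 : -τ / (C * t) = -(τ / C) / t := by ring
    rw [h1]
    have := key τ hτ
    linarith
  calc ((-τ / (C * t) + φ τ : ℝ) : EReal)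
      ≤ ((K * (-σ / t + φ σ) : ℝ) : EReal) := EReal.coe_le_coe_iff.mpr hreal
    _ = (K : EReal) * ((-σ / t + φ σ : ℝ) : EReal) := EReal.coe_mul _ _
    _ ≤ (K : EReal) * ⨆ τ : Ici (0:ℝ), ((-(τ : ℝ) / t + φ τ : ℝ) : EReal) := by
        apply mul_le_mul_of_nonneg_left
        · exact le_iSup (fun τ : Ici (0:ℝ) => ((-(τ : ℝ) / t + φ τ : ℝ) : EReal)) ⟨σ, hσ⟩
        · exact_mod_cast hKpos.le
end
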